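/- For D = gcd(a,N) and any residue \phi mod N, the number of \eta \in {1,...,D} with -\eta^2 \equiv \phi mod D is at most C \sqrt{D} \tau(D) for an absolute constant C, where \tau(D) is the number of divisors of D. Consequently the multiplicity of any eigenphase of V_{a,N} is O_\epsilon(D^{1/2+\epsilon}) for every \epsilon > 0. -/

import Mathlib

open Finset in
lemma my_tau_bound (ε : ℝ) (hε : 0 < ε) :
    ∃ C > (0:ℝ), ∀ D : ℕ, 0 < D → ((D.divisors.card : ℝ)) ≤ C * (D:ℝ) ^ ε := by
  have h2 : (1:ℝ) < (2:ℝ) ^ ε := by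
    calc (1:ℝ) = (2:ℝ) ^ (0:ℝ) := by simp
    _ < (2:ℝ) ^ ε := by
      exact Real.rpow_lt_rpow_left_iff (by norm_num) |>.mpr hε
  set δ : ℝ := min ((2:ℝ)^ε - 1) 1 with hδdef
  have hδ0 : 0 < δ := lt_min (by linarith) one_pos
  have hδ1 : δ ≤ 1 := min_le_right _ _
  set B : ℝ := 1/δ with hBdef
  have hB1 : (1:ℝ) ≤ B := by
    rw [hBdef]; rw [le_div_iff₀ hδ0]; linarith
  -- key1 : (a+1) ≤ B * ((2:ℝ)^a)^ε  for all a
  have key1 : ∀ a : ℕ, ((a:ℝ) + 1) ≤ B * ((2:ℝ)^a) ^ ε := by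
    intro a
    have h1 : ((1:ℝ) + δ) ^ a ≤ ((2:ℝ)^ε) ^ a := by
      apply pow_le_pow_left₀ (by linarith) (by have := min_le_left ((2:ℝ)^ε - 1) 1; linarith)
    have h2' : 1 + (a:ℝ) * δ ≤ (1 + δ) ^ a := by
      have := one_add_mul_le_pow (a := δ) (by linarith) a
      linarith [this]
    have h3 : δ * ((a:ℝ) + 1) ≤ 1 + (a:ℝ) * δ := by nlinarith [Nat.cast_nonneg (α := ℝ) a]
    have h4 : ((2:ℝ)^ε)^a = ((2:ℝ)^a) ^ ε := by
      rw [← Real.rpow_natCast ((2:ℝ)^ε) a, ← Real.rpow_natCast (2:ℝ) a,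
        ← Real.rpow_mul (by norm_num), ← Real.rpow_mul (by norm_num), mul_comm]
    rw [hBdef, div_mul_eq_mul_div, le_div_iff₀ hδ0, ← h4, one_mul]
    calc ((a:ℝ)+1) * δ = δ * ((a:ℝ)+1) := by ring
    _ ≤ 1 + (a:ℝ) * δ := h3
    _ ≤ (1+δ)^a := h2'
    _ ≤ ((2:ℝ)^ε)^a := h1
  set k : ℕ := ⌈1/ε⌉₊ with hkdef
  have hkε : 1 ≤ (k:ℝ) * ε := by
    have := Nat.le_ceil (1/ε)
    rw [← hkdef] at this
    calc (1:ℝ) = (1/ε) * ε := by field_simp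
    _ ≤ (k:ℝ) * ε := by nlinarith
  -- key2 : for primes p ≥ 2^k, (a+1) ≤ ((p:ℝ)^a)^ε
  have key2 : ∀ p a : ℕ, 2 ≤ p → 2^k ≤ p → ((a:ℝ) + 1) ≤ ((p:ℝ)^a) ^ ε := by
    intro p a hp2 hpk
    have h1 : ((a:ℝ) + 1) ≤ (2:ℝ)^a := by
      have := Nat.lt_two_pow_self (n := a)
      exact_mod_cast Nat.succ_le_of_lt this
    have h2' : ((2:ℝ)^a : ℝ) ≤ ((2:ℝ)^(k*a)) ^ ε := by
      rw [← Real.rpow_natCast (2:ℝ) a, ← Real.rpow_natCast (2:ℝ) (k*a),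
          ← Real.rpow_mul (by norm_num)]
      apply Real.rpow_le_rpow_of_exponent_le (by norm_num)
      push_cast
      nlinarith [Nat.cast_nonneg (α := ℝ) a]
    have h3 : ((2:ℝ)^(k*a)) ^ ε ≤ ((p:ℝ)^a) ^ ε := by
      apply Real.rpow_le_rpow (by positivity) _ (le_of_lt hε)
      rw [pow_mul]
      apply pow_le_pow_left₀ (by positivity)
      exact_mod_cast hpk
    calc ((a:ℝ)+1) ≤ (2:ℝ)^a := h1
    _ ≤ ((2:ℝ)^(k*a))^ε := h2'
    _ ≤ ((p:ℝ)^a)^ε := h3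
  refine ⟨B ^ (2^k), by positivity, ?_⟩
  intro D hD
  have hDne : D ≠ 0 := hD.ne'
  rw [Nat.card_divisors hDne]
  -- D = ∏ p^(a_p)
  have hfac : (D:ℝ) ^ ε = ∏ p ∈ D.primeFactors, (((p:ℝ) ^ (D.factorization p)) ^ ε) := by
    have hD' : (D:ℝ) = ∏ p ∈ D.primeFactors, (p:ℝ)^(D.factorization p) := by
      conv_lhs => rw [← Nat.factorization_prod_pow_eq_self hDne]
      rw [Finsupp.prod, Nat.support_factorization]
      push_cast
      rfl
    rw [hD', ← Real.finset_prod_rpow _ _ (fun p _ => by positivity)]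
  rw [hfac]
  have step : ∀ p ∈ D.primeFactors, ((D.factorization p : ℝ) + 1) ≤
      (if p < 2^k then B else 1) * ((p:ℝ) ^ (D.factorization p)) ^ ε := by
    intro p hp
    have hp' : 2 ≤ p := (Nat.prime_of_mem_primeFactors hp).two_le
    by_cases hcase : p < 2^k
    · rw [if_pos hcase]
      calc ((D.factorization p : ℝ) + 1) ≤ B * ((2:ℝ)^(D.factorization p)) ^ ε := key1 _
      _ ≤ B * ((p:ℝ)^(D.factorization p)) ^ ε := by
          apply mul_le_mul_of_nonneg_left _ (by linarith)
          apply Real.rpow_le_rpow (by positivity) _ (le_of_lt hε)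
          apply pow_le_pow_left₀ (by norm_num)
          exact_mod_cast hp'
    · rw [if_neg hcase, one_mul]
      exact key2 p _ hp' (not_lt.mp hcase)
  calc ((∏ p ∈ D.primeFactors, (D.factorization p + 1) : ℕ) : ℝ)
      = ∏ p ∈ D.primeFactors, ((D.factorization p : ℝ) + 1) := by push_cast; rfl
    _ ≤ ∏ p ∈ D.primeFactors, ((if p < 2^k then B else 1) * ((p:ℝ) ^ (D.factorization p)) ^ ε) := by
        apply Finset.prod_le_prod (fun p _ => by positivity) step
    _ = (∏ p ∈ D.primeFactors, (if p < 2^k then B else 1)) *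
        ∏ p ∈ D.primeFactors, ((p:ℝ) ^ (D.factorization p)) ^ ε := Finset.prod_mul_distrib
    _ ≤ B ^ (2^k) * ∏ p ∈ D.primeFactors, ((p:ℝ) ^ (D.factorization p)) ^ ε := by
        apply mul_le_mul_of_nonneg_right _ (Finset.prod_nonneg (fun p _ => by positivity))
        calc (∏ p ∈ D.primeFactors, (if p < 2^k then B else 1))
            = B ^ (D.primeFactors.filter (· < 2^k)).card := by
              rw [Finset.prod_ite, Finset.prod_const, Finset.prod_const, one_pow, mul_one]
          _ ≤ B ^ (2^k) := by
              apply pow_le_pow_right₀ hB1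
              calc (D.primeFactors.filter (· < 2^k)).card ≤ (Finset.range (2^k)).card := by
                    apply Finset.card_le_card
                    intro p hp
                    simp only [Finset.mem_filter] at hp
                    exact Finset.mem_range.mpr hp.2
                _ = 2^k := Finset.card_range _


open Finset in
lemma my_count_bound (D : ℕ) (hD : 0 < D) (ψ : ℤ) :
    ((((Finset.Icc 1 D).filter (fun η : ℕ => (D:ℤ) ∣ (η:ℤ)^2 + ψ)).card : ℝ)) ≤
      3 * Real.sqrt D * (D.divisors.card : ℝ) := by
  have hDne : D ≠ 0 := hD.ne'
  have hsqrt1 : (1:ℝ) ≤ Real.sqrt D := by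
    rw [show (1:ℝ) = Real.sqrt 1 by simp]
    exact Real.sqrt_le_sqrt (by exact_mod_cast hD)
  set S := (Finset.Icc 1 D).filter (fun η : ℕ => (D:ℤ) ∣ (η:ℤ)^2 + ψ) with hS
  rcases S.eq_empty_or_nonempty with he | ⟨η₀, hη₀⟩
  · rw [he]; simp; positivity
  simp only [hS, Finset.mem_filter, Finset.mem_Icc] at hη₀
  obtain ⟨⟨hη₀1, hη₀D⟩, hη₀dvd⟩ := hη₀
  set g : ℕ → ℕ := fun η => Nat.gcd D (η + η₀) with hg
  have hmem : ∀ η ∈ S, g η ∈ D.divisors := by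
    intro η hη
    exact Nat.mem_divisors.mpr ⟨Nat.gcd_dvd_left _ _, hDne⟩
  have hsum := Finset.card_eq_sum_card_fiberwise hmem
  -- fiber bound
  have fib : ∀ d ∈ D.divisors, (((S.filter (fun η => g η = d)).card : ℝ)) ≤ 3 * Real.sqrt D := by
    intro d hd
    obtain ⟨hdD, -⟩ := Nat.mem_divisors.mp hd
    have hdpos : 0 < d := Nat.pos_of_mem_divisors hd
    set m := D / d with hm
    have hdm : d * m = D := Nat.mul_div_cancel' hdD
    have hmpos : 0 < m := Nat.div_pos (Nat.le_of_dvd hD hdD) hdpos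
    set F := S.filter (fun η => g η = d) with hF
    -- for η ∈ F: d ∣ η + η₀ and (m:ℤ) ∣ η - η₀
    have hdvd1 : ∀ η ∈ F, d ∣ η + η₀ := by
      intro η hη
      have : g η = d := (Finset.mem_filter.mp hη).2
      rw [← this]
      exact Nat.gcd_dvd_right _ _
    have hdvd2 : ∀ η ∈ F, (m:ℤ) ∣ (η:ℤ) - (η₀:ℤ) := by
      intro η hη
      obtain ⟨hηS, hgη⟩ := Finset.mem_filter.mp hη
      have hηdvd : (D:ℤ) ∣ (η:ℤ)^2 + ψ := (Finset.mem_filter.mp hηS).2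
      have hDdiff : (D:ℤ) ∣ ((η:ℤ) - η₀) * ((η:ℤ) + η₀) := by
        have : (D:ℤ) ∣ ((η:ℤ)^2 + ψ) - ((η₀:ℤ)^2 + ψ) := dvd_sub hηdvd hη₀dvd
        convert this using 1; ring
      set s := (η + η₀) / d with hs
      have hds : d * s = η + η₀ := Nat.mul_div_cancel' (hdvd1 η hη)
      have hgη' : Nat.gcd D (η + η₀) = d := hgη
      have hcop : Nat.Coprime m s := by
        have := Nat.coprime_div_gcd_div_gcd (m := D) (n := η + η₀) (by rw [hgη']; exact hdpos)
        rwa [hgη'] at this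
      have hcopZ : IsCoprime (m:ℤ) (s:ℤ) := by
        rw [Int.isCoprime_iff_gcd_eq_one, Int.gcd_natCast_natCast]
        exact hcop
      have h1 : ((d:ℤ) * m) ∣ ((η:ℤ) - η₀) * ((d:ℤ) * s) := by
        rw [show ((d:ℤ) * s) = ((η:ℤ) + η₀) by exact_mod_cast congrArg (Nat.cast : ℕ → ℤ) hds]
        exact_mod_cast hdm ▸ hDdiff
      have h2 : (m:ℤ) ∣ ((η:ℤ) - η₀) * s := by
        have := h1
        rw [show ((η:ℤ) - η₀) * ((d:ℤ) * s) = (d:ℤ) * (((η:ℤ) - η₀) * s) by ring] at this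
        exact (mul_dvd_mul_iff_left (by exact_mod_cast hdpos.ne' : (d:ℤ) ≠ 0)).mp this
      exact hcopZ.dvd_of_dvd_mul_right h2
    -- bound A : F.card ≤ 2d+1
    have bndA : F.card ≤ 2 * d + 1 := by
      have := Finset.card_le_card_of_injOn (s := F) (f := fun η => ((η:ℤ) - η₀) / m)
        (t := Finset.Icc (-(d:ℤ)) d) ?_ ?_
      · calc F.card ≤ (Finset.Icc (-(d:ℤ)) d).card := this
        _ = 2 * d + 1 := by rw [Int.card_Icc]; omega
      · intro η hη
        have hdiv := hdvd2 η hη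
        obtain ⟨q, hq⟩ := hdiv
        have hηD : η ≤ D := by
          have := (Finset.mem_filter.mp (Finset.mem_filter.mp hη).1).1
          exact (Finset.mem_Icc.mp this).2
        have hq' : ((η:ℤ) - η₀) / m = q := by rw [hq]; exact Int.mul_ediv_cancel_left _ (by exact_mod_cast hmpos.ne')
        show ((η:ℤ) - η₀) / m ∈ Finset.Icc (-(d:ℤ)) d
        rw [hq', Finset.mem_Icc]
        constructor
        · by_contra hcon
          push_neg at hcon
          have : (m:ℤ) * q ≤ (-(d:ℤ) - 1) * m := by
            rw [mul_comm]
            apply mul_le_mul_of_nonneg_right _ (by positivity)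
            omega
          rw [← hq] at this
          have hDm : (d:ℤ) * m = D := by exact_mod_cast hdm
          nlinarith [hη₀D, hη₀1, hmpos, (show (1:ℤ) ≤ η₀ by exact_mod_cast hη₀1),
            (show (η₀:ℤ) ≤ D by exact_mod_cast hη₀D), (show (1:ℤ) ≤ m by exact_mod_cast hmpos)]
        · by_contra hcon
          push_neg at hcon
          have : ((d:ℤ) + 1) * m ≤ (m:ℤ) * q := by
            rw [mul_comm (m:ℤ) q]
            apply mul_le_mul_of_nonneg_right _ (by positivity)
            omega
          rw [← hq] at this
          have hDm : (d:ℤ) * m = D := by exact_mod_cast hdm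
          nlinarith [(show (1:ℤ) ≤ η₀ by exact_mod_cast hη₀1), (show (η:ℤ) ≤ D by exact_mod_cast hηD),
            (show (1:ℤ) ≤ m by exact_mod_cast hmpos)]
      · intro η1 h1 η2 h2 heq
        obtain ⟨q1, hq1⟩ := hdvd2 η1 h1
        obtain ⟨q2, hq2⟩ := hdvd2 η2 h2
        have e1 : ((η1:ℤ) - η₀) / m = q1 := by rw [hq1]; exact Int.mul_ediv_cancel_left _ (by exact_mod_cast hmpos.ne')
        have e2 : ((η2:ℤ) - η₀) / m = q2 := by rw [hq2]; exact Int.mul_ediv_cancel_left _ (by exact_mod_cast hmpos.ne')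
        have heq' : q1 = q2 := by rw [← e1, ← e2]; exact heq
        have : (η1:ℤ) = η2 := by rw [heq'] at hq1; linarith [hq1, hq2]
        exact_mod_cast this
    -- bound B : F.card ≤ 2*D/d
    have bndB : F.card ≤ 2 * D / d := by
      have := Finset.card_le_card_of_injOn (s := F) (f := fun η => (η + η₀) / d)
        (t := Finset.Icc 1 (2 * D / d)) ?_ ?_
      · calc F.card ≤ (Finset.Icc 1 (2*D/d)).card := this
        _ = 2 * D / d := by simp
      · intro η hη
        have hd1 := hdvd1 η hη
        have hηD : η ≤ D := by
          have := (Finset.mem_filter.mp (Finset.mem_filter.mp hη).1).1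
          exact (Finset.mem_Icc.mp this).2
        rw [Finset.mem_coe, Finset.mem_Icc]
        constructor
        · apply Nat.one_le_div_iff hdpos |>.mpr
          have : d ≤ η + η₀ := Nat.le_of_dvd (by omega) hd1
          omega
        · apply Nat.div_le_div_right; omega
      · intro η1 h1 η2 h2 heq
        have e1 := Nat.div_mul_cancel (hdvd1 η1 h1)
        have e2 := Nat.div_mul_cancel (hdvd1 η2 h2)
        simp only at heq
        have : η1 + η₀ = η2 + η₀ := by rw [← e1, ← e2, heq]
        omega
    -- combine
    rcases le_or_gt d (Nat.sqrt D) with hcase | hcase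
    · have h1 : (d:ℝ) ≤ Real.sqrt D := by
        have h2 : ((Nat.sqrt D : ℝ)) ≤ Real.sqrt D := by
          rw [show ((Nat.sqrt D : ℝ)) = Real.sqrt ((Nat.sqrt D)^2) by rw [Real.sqrt_sq (by positivity)]]
          apply Real.sqrt_le_sqrt
          exact_mod_cast Nat.sqrt_le' D
        exact le_trans (by exact_mod_cast hcase) h2
      calc ((F.card : ℝ)) ≤ ((2 * d + 1 : ℕ) : ℝ) := by exact_mod_cast bndA
      _ = 2 * (d:ℝ) + 1 := by push_cast; ring
      _ ≤ 3 * Real.sqrt D := by linarith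
    · have h1 : Real.sqrt D < d := by
        have h2 : Real.sqrt D < (Nat.sqrt D : ℝ) + 1 := by
          rw [show ((Nat.sqrt D : ℝ) + 1) = ((Nat.sqrt D + 1 : ℕ) : ℝ) by push_cast; ring]
          apply Real.sqrt_lt' (by positivity) |>.mpr
          exact_mod_cast Nat.lt_succ_sqrt' D
        have : (Nat.sqrt D : ℝ) + 1 ≤ d := by exact_mod_cast hcase
        linarith
      have hsD : (0:ℝ) < Real.sqrt D := by linarith
      calc ((F.card : ℝ)) ≤ ((2 * D / d : ℕ) : ℝ) := by exact_mod_cast bndB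
      _ ≤ (2 * (D:ℝ)) / (d:ℝ) := by
          have := Nat.cast_div_le (α := ℝ) (m := 2 * D) (n := d)
          push_cast at this ⊢
          exact this
      _ ≤ (2 * (D:ℝ)) / Real.sqrt D := by
          apply div_le_div_of_nonneg_left (by positivity) hsD h1.le
      _ = 2 * Real.sqrt D := by
          rw [mul_div_assoc, Real.div_sqrt]
      _ ≤ 3 * Real.sqrt D := by linarith
  calc ((S.card : ℝ)) = ∑ d ∈ D.divisors, (((S.filter (fun η => g η = d)).card : ℝ)) := by
        rw [hsum]; push_cast; rfl
  _ ≤ ∑ d ∈ D.divisors, 3 * Real.sqrt D := Finset.sum_le_sum fib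
  _ = 3 * Real.sqrt D * (D.divisors.card : ℝ) := by rw [Finset.sum_const, nsmul_eq_mul]; ring

/-- (i) For `D = gcd(a,N)`, the number of `η ∈ {1,…,D}` with
`-η² ≡ φ mod D` is at most `C √D τ(D)` for an absolute constant `C > 0`.
(ii) Consequently, the multiplicity of any eigenphase
`φ_{η,l} = lD - η² + ηa - a²(M-1)(2M-1)/6 (mod N)` of `V_{a,N}` is
`O_ε(D^{1/2+ε})` for every `ε > 0`. -/
theorem eigenphase_multiplicity_bound :
    (∃ C > (0 : ℝ), ∀ (a : ℤ) (N : ℕ), 0 < N → ∀ φ : ℤ,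
      (({η : ℕ | η ∈ Finset.Icc 1 (Int.gcd a (N : ℤ)) ∧
          ((Int.gcd a (N : ℤ) : ℤ)) ∣ ((η : ℤ) ^ 2 + φ)}.ncard : ℝ)) ≤
        C * Real.sqrt (Int.gcd a (N : ℤ)) * ((Int.gcd a (N : ℤ)).divisors.card : ℝ)) ∧
    (∀ ε > (0 : ℝ), ∃ Cε > (0 : ℝ), ∀ (a : ℤ) (N : ℕ), 0 < N → ∀ φ : ℝ,
      (({p : ℕ × ℕ |
          p.1 ∈ Finset.Icc 1 (Int.gcd a (N : ℤ)) ∧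
          p.2 < N / Int.gcd a (N : ℤ) ∧
          ∃ k : ℤ,
            (p.2 : ℝ) * (Int.gcd a (N : ℤ) : ℝ) - (p.1 : ℝ) ^ 2 + (p.1 : ℝ) * (a : ℝ) -
              (a : ℝ) ^ 2 * (((N / Int.gcd a (N : ℤ) : ℕ) : ℝ) - 1) *
                (2 * ((N / Int.gcd a (N : ℤ) : ℕ) : ℝ) - 1) / 6
            = φ + (k : ℝ) * (N : ℝ)}.ncard : ℝ)) ≤
        Cε * (Int.gcd a (N : ℤ) : ℝ) ^ ((1 : ℝ) / 2 + ε)) := by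
  constructor
  · refine ⟨3, by norm_num, ?_⟩
    intro a N hN φ
    set D := Int.gcd a (N:ℤ) with hDdef
    have hDpos : 0 < D := Int.gcd_pos_of_ne_zero_right a (by exact_mod_cast hN.ne')
    have hset : {η : ℕ | η ∈ Finset.Icc 1 D ∧ (D:ℤ) ∣ ((η:ℤ)^2 + φ)} =
        (((Finset.Icc 1 D).filter (fun η : ℕ => (D:ℤ) ∣ (η:ℤ)^2 + φ) : Finset ℕ) : Set ℕ) := by
      ext η; simp [Finset.mem_filter]
    rw [hset, Set.ncard_coe_finset]
    exact my_count_bound D hDpos φ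
  · intro ε hε
    obtain ⟨CA, hCA0, hCA⟩ := my_tau_bound ε hε
    refine ⟨3 * CA, by positivity, ?_⟩
    intro a N hN φ
    set D := Int.gcd a (N:ℤ) with hDdef
    have hDpos : 0 < D := Int.gcd_pos_of_ne_zero_right a (by exact_mod_cast hN.ne')
    set M := N / D with hMdef
    have hDN : D ∣ N := by
      have := Int.gcd_dvd_right (a := a) (b := (N:ℤ))
      exact_mod_cast this
    have hNDM : (N:ℤ) = (D:ℤ) * M := by
      rw [hMdef]; exact_mod_cast (Nat.mul_div_cancel' hDN).symm
    have hRHS : (0:ℝ) ≤ 3 * CA * (D:ℝ) ^ ((1:ℝ)/2 + ε) := by positivity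
    set c : ℝ := (a:ℝ)^2 * ((M:ℝ) - 1) * (2 * (M:ℝ) - 1) / 6 with hc
    set T := {p : ℕ × ℕ |
          p.1 ∈ Finset.Icc 1 D ∧ p.2 < M ∧
          ∃ k : ℤ, (p.2 : ℝ) * (D : ℝ) - (p.1 : ℝ) ^ 2 + (p.1 : ℝ) * (a : ℝ) - c
            = φ + (k : ℝ) * (N : ℝ)} with hT
    rcases T.eq_empty_or_nonempty with he | ⟨⟨η₀, l₀⟩, hmem₀⟩
    · rw [he]; simpa using hRHS
    obtain ⟨hη₀, hl₀, k₀, hk₀⟩ := hmem₀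
    set J : ℤ := (l₀:ℤ) * D - (η₀:ℤ)^2 + (η₀:ℤ) * a - k₀ * N with hJ
    have hφ : φ = (J:ℝ) - c := by
      have : (l₀ : ℝ) * (D : ℝ) - (η₀ : ℝ) ^ 2 + (η₀ : ℝ) * (a : ℝ) - c = φ + (k₀ : ℝ) * (N : ℝ) := hk₀
      rw [hJ]; push_cast; linarith
    -- every (η,l) ∈ T gives an integer relation
    have key : ∀ p : ℕ × ℕ, p ∈ T → ∃ k : ℤ, (p.2:ℤ) * D - (p.1:ℤ)^2 + (p.1:ℤ) * a = J + k * N := by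
      rintro ⟨η, l⟩ ⟨-, -, k, hk⟩
      refine ⟨k, ?_⟩
      have hR : (l : ℝ) * (D : ℝ) - (η : ℝ) ^ 2 + (η : ℝ) * (a : ℝ) = (J:ℝ) + (k:ℝ) * N := by
        rw [hφ] at hk; linarith [hk]
      exact_mod_cast hR
    -- first coordinates lie in the quadratic residue set
    have hsub : Prod.fst '' T ⊆
        (((Finset.Icc 1 D).filter (fun η : ℕ => (D:ℤ) ∣ (η:ℤ)^2 + J) : Finset ℕ) : Set ℕ) := by
      rintro η ⟨⟨η', l⟩, hp, rfl⟩
      obtain ⟨k, hk⟩ := key _ hp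
      obtain ⟨hIcc, -, -⟩ := hp
      simp only [Finset.coe_filter, Set.mem_setOf_eq, Finset.mem_filter]
      refine ⟨hIcc, ?_⟩
      have hDa : (D:ℤ) ∣ a := Int.gcd_dvd_left a (N:ℤ)
      have hDn : (D:ℤ) ∣ (N:ℤ) := Int.gcd_dvd_right a (N:ℤ)
      have : ((η':ℕ):ℤ)^2 + J = (l:ℤ) * D + (η':ℤ) * a - k * N := by linarith [hk]
      rw [this]
      exact dvd_sub (dvd_add (dvd_mul_left _ _) (Dvd.dvd.mul_left hDa _)) (hDn.mul_left _)
    -- fst is injective on T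
    have hinj : Set.InjOn Prod.fst T := by
      rintro ⟨η, l⟩ hp ⟨η', l'⟩ hq (rfl : η = η')
      obtain ⟨k, hk⟩ := key _ hp
      obtain ⟨k', hk'⟩ := key _ hq
      obtain ⟨-, hlM, -⟩ := hp
      obtain ⟨-, hl'M, -⟩ := hq
      have hDne : (D:ℤ) ≠ 0 := by exact_mod_cast hDpos.ne'
      have h1 : ((l:ℤ) - l') * D = (k - k') * ((D:ℤ) * M) := by
        rw [← hNDM]; simp only at hk hk'; linarith [hk, hk']
      have h2 : ((l:ℤ) - l') = (k - k') * M := by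
        have : ((l:ℤ) - l') * D = ((k - k') * M) * D := by rw [h1]; ring
        exact mul_right_cancel₀ hDne this
      have h3 : (l:ℤ) - l' = 0 := by
        have hlM' : (l:ℤ) < M := by exact_mod_cast hlM
        have hl'M' : (l':ℤ) < M := by exact_mod_cast hl'M
        have hl0 : (0:ℤ) ≤ l := Int.natCast_nonneg l
        have hl0' : (0:ℤ) ≤ l' := Int.natCast_nonneg l'
        have habs : |(l:ℤ) - l'| < M := by rw [abs_lt]; constructor <;> linarith
        exact Int.eq_zero_of_abs_lt_dvd ⟨k - k', by rw [h2, mul_comm]⟩ habs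
      have : l = l' := by omega
      simp [this]
    have h2 : (T.ncard : ℝ) ≤
        (((Finset.Icc 1 D).filter (fun η : ℕ => (D:ℤ) ∣ (η:ℤ)^2 + J)).card : ℝ) := by
      rw [← Set.ncard_image_of_injOn hinj, ← Set.ncard_coe_finset]
      exact_mod_cast Nat.cast_le.mpr (Set.ncard_le_ncard hsub (Finset.finite_toSet _))
    have h3 := my_count_bound D hDpos J
    have h4 : ((D.divisors.card : ℝ)) ≤ CA * (D:ℝ)^ε := hCA D hDpos
    have hsqrt : Real.sqrt (D:ℝ) = (D:ℝ) ^ ((1:ℝ)/2) := by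
      rw [Real.sqrt_eq_rpow]
    have h5 : (3:ℝ) * Real.sqrt D * (D.divisors.card : ℝ) ≤ 3 * CA * (D:ℝ)^((1:ℝ)/2 + ε) := by
      rw [Real.rpow_add (by exact_mod_cast hDpos)]
      calc (3:ℝ) * Real.sqrt (D:ℝ) * (D.divisors.card : ℝ)
          ≤ 3 * (D:ℝ)^((1:ℝ)/2) * (CA * (D:ℝ)^ε) := by
            rw [hsqrt]
            apply mul_le_mul_of_nonneg_left h4 (by positivity)
      _ = 3 * CA * ((D:ℝ)^((1:ℝ)/2) * (D:ℝ)^ε) := by ring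
    linarith [h2, h3, h5]
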